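/- Let n ≥ 1 and τ ≥ 0, and set σ = τ/((n−1)τ + n). Then Ω̃(σ) ⊆ Ω^n(τ): if ω ∈ ℝⁿ \ ℚⁿ is nonresonant and there is C > 0 with T_{i+1}(ω) ≤ C·T_i(ω)^{1+σ} for all i ∈ ℕ, then there exists D > 0 such that ‖⟨k,ω⟩‖_ℤ ≥ D·|k|^{-(1+τ)n} for every nonzero k ∈ ℤⁿ. -/

import Mathlib

open Finset

/-- Sup norm on `ℝⁿ`. -/
noncomputable def supNorm {n : ℕ} (x : Fin n → ℝ) : ℝ := ⨆ i, |x i|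

/-- Sup-norm distance from `x ∈ ℝⁿ` to the lattice `ℤⁿ`. -/
noncomputable def distZ {n : ℕ} (x : Fin n → ℝ) : ℝ :=
  sInf {r : ℝ | ∃ k : Fin n → ℤ, r = supNorm (fun i => x i - k i)}

/-- Distance from a real number to `ℤ`. -/
noncomputable def distZ1 (t : ℝ) : ℝ := sInf {r : ℝ | ∃ m : ℤ, r = |t - m|}

/-- `ω ∈ ℚⁿ`. -/
def IsRationalVec {n : ℕ} (ω : Fin n → ℝ) : Prop := ∀ i, ∃ q : ℚ, (q : ℝ) = ω i

/-- `ω` is resonant: some nonzero integer vector `k` has `⟨k, ω⟩ ∈ ℤ`. -/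
def Resonant {n : ℕ} (ω : Fin n → ℝ) : Prop :=
  ∃ k : Fin n → ℤ, k ≠ 0 ∧ ∃ m : ℤ, ∑ i, (k i : ℝ) * ω i = (m : ℝ)

/-- The sequence of periods of `ω`. -/
noncomputable def periods {n : ℕ} (ω : Fin n → ℝ) : ℕ → ℕ
  | 0 => 1
  | i + 1 => sInf {T : ℕ | 1 ≤ T ∧
      distZ (fun j => (T : ℝ) * ω j) < distZ (fun j => (periods ω i : ℝ) * ω j)}

/-- The resonance module of `ω`, as a subgroup of `ℤⁿ`. -/
def resModule {n : ℕ} (ω : Fin n → ℝ) : AddSubgroup (Fin n → ℤ) where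
  carrier := {k | ∃ m : ℤ, ∑ i, (k i : ℝ) * ω i = (m : ℝ)}
  zero_mem' := ⟨0, by simp⟩
  add_mem' := by
    rintro a b ⟨ma, ha⟩ ⟨mb, hb⟩
    refine ⟨ma + mb, ?_⟩
    push_cast
    simp only [Pi.add_apply, Int.cast_add, add_mul, Finset.sum_add_distrib, ha, hb]
  neg_mem' := by
    rintro a ⟨m, hm⟩
    refine ⟨-m, ?_⟩
    push_cast
    simp [neg_mul, Finset.sum_neg_distrib, hm]
section Aux
variable {n : ℕ}

lemma supNorm_eq_sup' [Nonempty (Fin n)] (x : Fin n → ℝ) :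
    supNorm x = (univ : Finset (Fin n)).sup' univ_nonempty (fun i => |x i|) := by
  rw [supNorm, ← Finset.sup'_univ_eq_ciSup]

lemma le_supNorm [Nonempty (Fin n)] (x : Fin n → ℝ) (i : Fin n) : |x i| ≤ supNorm x := by
  rw [supNorm_eq_sup']; exact Finset.le_sup' (fun i => |x i|) (mem_univ i)

lemma supNorm_le [Nonempty (Fin n)] {x : Fin n → ℝ} {c : ℝ} (h : ∀ i, |x i| ≤ c) :
    supNorm x ≤ c := by
  rw [supNorm_eq_sup']; exact Finset.sup'_le _ _ fun i _ => h i

lemma supNorm_lt [Nonempty (Fin n)] {x : Fin n → ℝ} {c : ℝ} (h : ∀ i, |x i| < c) :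
    supNorm x < c := by
  rw [supNorm_eq_sup']; exact (Finset.sup'_lt_iff _).2 fun i _ => h i

lemma supNorm_nonneg [Nonempty (Fin n)] (x : Fin n → ℝ) : 0 ≤ supNorm x :=
  le_trans (abs_nonneg _) (le_supNorm x (Classical.arbitrary _))

lemma round_nearest (t : ℝ) (m : ℤ) : |t - round t| ≤ |t - m| := by
  rcases eq_or_ne m (round t) with h | h
  · rw [h]
  · have h0 : m - round t ≠ 0 := sub_ne_zero.2 h
    have h1 : (1 : ℝ) ≤ |((m : ℝ) - round t)| := by
      have := Int.one_le_abs h0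
      calc (1:ℝ) = ((1:ℤ):ℝ) := by norm_num
        _ ≤ ((|m - round t| : ℤ) : ℝ) := by exact_mod_cast this
        _ = |((m:ℝ) - round t)| := by push_cast [Int.cast_abs]; ring_nf
    have h2 := abs_sub_round t
    have h3 : |((m:ℝ) - round t)| ≤ |(m:ℝ) - t| + |t - round t| := abs_sub_le _ _ _
    have h4 : |(m:ℝ) - t| = |t - m| := abs_sub_comm _ _
    linarith

lemma distZ_bddBelow (x : Fin n → ℝ) [Nonempty (Fin n)] :
    BddBelow {r : ℝ | ∃ k : Fin n → ℤ, r = supNorm (fun i => x i - k i)} :=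
  ⟨0, by rintro r ⟨kk, rfl⟩; exact supNorm_nonneg _⟩

lemma distZ_eq [Nonempty (Fin n)] (x : Fin n → ℝ) :
    distZ x = supNorm (fun i => x i - round (x i)) := by
  apply le_antisymm
  · exact csInf_le (distZ_bddBelow x) ⟨fun i => round (x i), rfl⟩
  · refine le_csInf ⟨supNorm (fun i => x i - (round (x i) : ℤ)), fun i => round (x i), rfl⟩ ?_
    rintro r ⟨kk, rfl⟩
    apply supNorm_le
    intro i
    exact (round_nearest (x i) (kk i)).trans (le_supNorm (fun j => x j - kk j) i)

lemma distZ_le [Nonempty (Fin n)] (x : Fin n → ℝ) (kk : Fin n → ℤ) :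
    distZ x ≤ supNorm (fun i => x i - kk i) :=
  csInf_le (distZ_bddBelow x) ⟨kk, rfl⟩

lemma distZ1_eq (t : ℝ) : distZ1 t = |t - round t| := by
  apply le_antisymm
  · exact csInf_le ⟨0, by rintro r ⟨m, rfl⟩; exact abs_nonneg _⟩ ⟨round t, rfl⟩
  · refine le_csInf ⟨|t - (round t : ℤ)|, round t, rfl⟩ ?_
    rintro r ⟨m, rfl⟩
    exact round_nearest t m

end Aux

lemma pigeonhole {n : ℕ} [Nonempty (Fin n)] (ω : Fin n → ℝ) {c : ℝ} (hc : 0 < c) {Np : ℕ}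
    (hNp : (⌊1/c⌋₊ + 1)^n < Np) :
    ∃ T : ℕ, 1 ≤ T ∧ T < Np ∧ distZ (fun j => (T : ℝ) * ω j) < c := by
  classical
  set M : ℕ := ⌊1/c⌋₊ + 1 with hM
  have hM0 : 0 < M := Nat.succ_pos _
  have hMR : (0:ℝ) < M := by exact_mod_cast hM0
  have hMc : 1/(M:ℝ) < c := by
    have h1 : (1/c : ℝ) < M := by
      rw [hM]; push_cast; exact Nat.lt_floor_add_one _
    rw [div_lt_iff₀ hMR]
    calc (1:ℝ) = c * (1/c) := by field_simp
      _ < c * M := by exact mul_lt_mul_of_pos_left h1 hc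
  set f : ℕ → (Fin n → Fin M) := fun t j =>
    ⟨(⌊(M:ℝ) * Int.fract ((t:ℝ) * ω j)⌋).toNat, by
      have h1 : (M:ℝ) * Int.fract ((t:ℝ) * ω j) < M := by
        have := Int.fract_lt_one ((t:ℝ) * ω j)
        nlinarith
      have h2 : ⌊(M:ℝ) * Int.fract ((t:ℝ) * ω j)⌋ < (M:ℤ) := Int.floor_lt.2 (by exact_mod_cast h1)
      exact (Int.toNat_lt' hM0).2 h2⟩ with hf
  have hcard : (Finset.univ : Finset (Fin n → Fin M)).card < (Finset.range Np).card := by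
    rw [Finset.card_univ, Fintype.card_fun, Finset.card_range, Fintype.card_fin, Fintype.card_fin]
    exact hNp
  obtain ⟨t, ht, t', ht', hne, heq⟩ :=
    Finset.exists_ne_map_eq_of_card_lt_of_maps_to hcard
      (fun a _ => mem_univ (f a))
  have key : ∀ a b : ℕ, b < Np → a < b → f a = f b →
      ∃ T : ℕ, 1 ≤ T ∧ T < Np ∧ distZ (fun j => (T : ℝ) * ω j) < c := by
    intro a b hb hab hfeq
    refine ⟨b - a, by omega, by omega, ?_⟩
    have hcast : ((b - a : ℕ) : ℝ) = (b:ℝ) - a := by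
      push_cast [Nat.cast_sub hab.le]; ring
    have hklt : ∀ j, |Int.fract ((b:ℝ)*ω j) - Int.fract ((a:ℝ)*ω j)| < 1/M := by
      intro j
      have hj := congrFun hfeq j
      have hval : (⌊(M:ℝ) * Int.fract ((a:ℝ) * ω j)⌋).toNat
          = (⌊(M:ℝ) * Int.fract ((b:ℝ) * ω j)⌋).toNat := congrArg Fin.val hj
      have hnna : (0:ℤ) ≤ ⌊(M:ℝ) * Int.fract ((a:ℝ) * ω j)⌋ :=
        Int.floor_nonneg.2 (mul_nonneg hMR.le (Int.fract_nonneg _))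
      have hnnb : (0:ℤ) ≤ ⌊(M:ℝ) * Int.fract ((b:ℝ) * ω j)⌋ :=
        Int.floor_nonneg.2 (mul_nonneg hMR.le (Int.fract_nonneg _))
      have hfl : ⌊(M:ℝ) * Int.fract ((a:ℝ) * ω j)⌋ = ⌊(M:ℝ) * Int.fract ((b:ℝ) * ω j)⌋ := by
        omega
      have h1 := Int.floor_le ((M:ℝ) * Int.fract ((a:ℝ) * ω j))
      have h2 := Int.lt_floor_add_one ((M:ℝ) * Int.fract ((a:ℝ) * ω j))
      have h3 := Int.floor_le ((M:ℝ) * Int.fract ((b:ℝ) * ω j))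
      have h4 := Int.lt_floor_add_one ((M:ℝ) * Int.fract ((b:ℝ) * ω j))
      rw [hfl] at h1 h2
      rw [abs_sub_lt_iff]
      constructor <;> [skip; skip] <;>
        (rw [lt_div_iff₀ hMR] <;> nlinarith)
    have hlt : distZ (fun j => ((b - a : ℕ) : ℝ) * ω j) < 1/M := by
      refine lt_of_le_of_lt
        (distZ_le _ (fun j => ⌊(b:ℝ)*ω j⌋ - ⌊(a:ℝ)*ω j⌋)) ?_
      apply supNorm_lt
      intro j
      have heq2 : ((b - a : ℕ) : ℝ) * ω j - ((⌊(b:ℝ)*ω j⌋ - ⌊(a:ℝ)*ω j⌋ : ℤ) : ℝ)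
          = Int.fract ((b:ℝ)*ω j) - Int.fract ((a:ℝ)*ω j) := by
        rw [hcast, Int.fract, Int.fract]
        push_cast
        ring
      rw [heq2]
      exact hklt j
    exact lt_trans hlt hMc
  rcases hne.lt_or_gt with h | h
  · exact key t t' (mem_range.1 ht') h heq
  · exact key t' t (mem_range.1 ht) h heq.symm

noncomputable def ddist {n : ℕ} (ω : Fin n → ℝ) (T : ℕ) : ℝ := distZ fun j => (T : ℝ) * ω j

section Periods
variable {n : ℕ} [Nonempty (Fin n)] (ω : Fin n → ℝ) (hres : ¬ Resonant ω)

lemma periods_succ_def (i : ℕ) :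
    periods ω (i+1) = sInf {T : ℕ | 1 ≤ T ∧ ddist ω T < ddist ω (periods ω i)} := rfl

lemma periods_zero : periods ω 0 = 1 := rfl

include hres in
lemma ddist_pos {T : ℕ} (hT : 1 ≤ T) : 0 < ddist ω T := by
  have hnn : 0 ≤ ddist ω T := by rw [ddist, distZ_eq]; exact supNorm_nonneg _
  rcases hnn.lt_or_eq with h | h
  · exact h
  · exfalso; apply hres
    have hco : ∀ j, (T:ℝ) * ω j = round ((T:ℝ) * ω j) := by
      intro j
      have h1 : |(T:ℝ) * ω j - round ((T:ℝ) * ω j)| ≤ ddist ω T := by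
        rw [ddist, distZ_eq]
        exact le_supNorm (fun j => (T:ℝ) * ω j - round ((T:ℝ) * ω j)) j
      rw [← h] at h1
      have h2 := abs_nonneg ((T:ℝ) * ω j - round ((T:ℝ) * ω j))
      have h3 : |(T:ℝ) * ω j - round ((T:ℝ) * ω j)| = 0 := le_antisymm h1 h2
      have := abs_eq_zero.1 h3
      linarith [sub_eq_zero.1 this]
    have j0 : Fin n := Classical.arbitrary _
    refine ⟨fun j => if j = j0 then (T:ℤ) else 0, ?_, round ((T:ℝ) * ω j0), ?_⟩
    · intro hzero
      have hz : (if j0 = j0 then (T:ℤ) else 0) = 0 := congrFun hzero j0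
      rw [if_pos rfl] at hz
      omega
    · rw [Finset.sum_eq_single j0]
      · simp only [if_true, eq_self_iff_true, ite_true, ↓reduceIte]
        push_cast
        exact hco j0
      · intro b _ hb; simp [hb]
      · intro hb; exact absurd (mem_univ j0) hb

include hres in
lemma periods_core : ∀ i : ℕ, 1 ≤ periods ω i ∧
    (∀ T, 1 ≤ T → T ≤ periods ω i → ddist ω (periods ω i) ≤ ddist ω T) := by
  intro i
  induction i with
  | zero =>
      refine ⟨le_refl 1, ?_⟩
      intro T h1 h2
      have : T = 1 := le_antisymm h2 h1
      rw [this, periods_zero]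
  | succ i ih =>
      obtain ⟨h1, hmin⟩ := ih
      have hpos : 0 < ddist ω (periods ω i) := ddist_pos ω hres h1
      have hne : {T : ℕ | 1 ≤ T ∧ ddist ω T < ddist ω (periods ω i)}.Nonempty := by
        obtain ⟨T, hT1, _, hTlt⟩ := pigeonhole ω hpos
          (Np := (⌊1/(ddist ω (periods ω i))⌋₊ + 1)^n + 1) (Nat.lt_succ_self _)
        exact ⟨T, hT1, hTlt⟩
      have hmem := Nat.sInf_mem hne
      rw [← periods_succ_def] at hmem
      obtain ⟨hs1, hslt⟩ := hmem
      refine ⟨hs1, ?_⟩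
      intro T hT1 hTle
      rcases eq_or_lt_of_le hTle with h | h
      · rw [h]
      · have hnotmem : T ∉ {T : ℕ | 1 ≤ T ∧ ddist ω T < ddist ω (periods ω i)} := by
          apply Nat.notMem_of_lt_sInf
          rw [← periods_succ_def]; exact h
        have hge : ¬ ddist ω T < ddist ω (periods ω i) := fun hh => hnotmem ⟨hT1, hh⟩
        push_neg at hge
        exact le_trans hslt.le hge

include hres in
lemma periods_succ_mem (i : ℕ) :
    ddist ω (periods ω (i+1)) < ddist ω (periods ω i) := by
  have h1 := (periods_core ω hres i).1
  have hpos : 0 < ddist ω (periods ω i) := ddist_pos ω hres h1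
  have hne : {T : ℕ | 1 ≤ T ∧ ddist ω T < ddist ω (periods ω i)}.Nonempty := by
    obtain ⟨T, hT1, _, hTlt⟩ := pigeonhole ω hpos
      (Np := (⌊1/(ddist ω (periods ω i))⌋₊ + 1)^n + 1) (Nat.lt_succ_self _)
    exact ⟨T, hT1, hTlt⟩
  have hmem := Nat.sInf_mem hne
  rw [← periods_succ_def] at hmem
  exact hmem.2

include hres in
lemma periods_min (i : ℕ) {T : ℕ} (hT1 : 1 ≤ T) (hlt : T < periods ω (i+1)) :
    ddist ω (periods ω i) ≤ ddist ω T := by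
  have hnotmem : T ∉ {T : ℕ | 1 ≤ T ∧ ddist ω T < ddist ω (periods ω i)} := by
    apply Nat.notMem_of_lt_sInf
    rw [← periods_succ_def]; exact hlt
  have hge : ¬ ddist ω T < ddist ω (periods ω i) := fun hh => hnotmem ⟨hT1, hh⟩
  push_neg at hge
  exact hge

include hres in
lemma periods_strict (i : ℕ) : periods ω i < periods ω (i+1) := by
  by_contra h
  push_neg at h
  have h2 := (periods_core ω hres i).2 _ ((periods_core ω hres (i+1)).1) h
  exact absurd (periods_succ_mem ω hres i) (not_lt.2 h2)

include hres in
lemma periods_ge (i : ℕ) : i + 1 ≤ periods ω i := by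
  induction i with
  | zero => exact le_refl 1
  | succ i ih => have := periods_strict ω hres i; omega

include hres in
lemma ddist_le_half (i : ℕ) : ddist ω (periods ω i) ≤ 1/2 := by
  have h := (periods_core ω hres i).2 1 le_rfl (periods_core ω hres i).1
  refine le_trans h ?_
  rw [ddist, distZ_eq]
  apply supNorm_le
  intro j
  exact abs_sub_round _

include hres in
lemma periods_pack (i : ℕ) :
    (periods ω (i+1) : ℝ) ≤ (2 / ddist ω (periods ω i))^n := by
  set δ := ddist ω (periods ω i) with hδdef
  have hδ0 : 0 < δ := ddist_pos ω hres (periods_core ω hres i).1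
  have hδ1 : δ ≤ 1/2 := ddist_le_half ω hres i
  by_contra hcon
  push_neg at hcon
  have hM : ((⌊1/δ⌋₊ + 1 : ℕ) : ℝ) ≤ 2/δ := by
    push_cast
    have h1 := Nat.floor_le (show (0:ℝ) ≤ 1/δ by positivity)
    have h2 : (1:ℝ) ≤ 1/δ := by rw [le_div_iff₀ hδ0]; linarith
    have h3 : (2:ℝ)/δ = 1/δ + 1/δ := by ring
    linarith
  have hnat : (⌊1/δ⌋₊ + 1)^n < periods ω (i+1) := by
    have hcast : (((⌊1/δ⌋₊ + 1)^n : ℕ) : ℝ) < (periods ω (i+1) : ℝ) := by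
      push_cast
      calc ((⌊1/δ⌋₊ : ℝ) + 1)^n ≤ (2/δ)^n := by
            apply pow_le_pow_left₀ (by positivity)
            push_cast at hM
            exact hM
        _ < _ := hcon
    exact_mod_cast hcast
  obtain ⟨T, hT1, hTlt, hTd⟩ := pigeonhole ω hδ0 hnat
  exact absurd hTd (not_lt.2 (periods_min ω hres i hT1 hTlt))

include hres in
lemma ddist_small {c : ℝ} (hc : 0 < c) : ∃ i, ddist ω (periods ω i) < c := by
  obtain ⟨j, hj⟩ := exists_nat_gt ((2/c)^n)
  refine ⟨j, ?_⟩
  set δ := ddist ω (periods ω j) with hδdef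
  have hδ0 : 0 < δ := ddist_pos ω hres (periods_core ω hres j).1
  have hp := periods_pack ω hres j
  have hge : ((j:ℝ) + 2) ≤ (periods ω (j+1) : ℝ) := by
    have := periods_ge ω hres (j+1)
    exact_mod_cast this
  have h1 : (2/c)^n < (2/δ)^n := by
    calc (2/c)^n < (j:ℝ) := hj
      _ ≤ (j:ℝ) + 2 := by linarith
      _ ≤ (periods ω (j+1) : ℝ) := hge
      _ ≤ (2/δ)^n := hp
  have h2 : 2/c < 2/δ := by
    by_contra h
    push_neg at h
    exact absurd h1 (not_lt.2 (pow_le_pow_left₀ (by positivity) h n))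
  rw [div_lt_div_iff₀ hc hδ0] at h2
  linarith

end Periods

set_option maxHeartbeats 1000000 in
/-- with `σ = τ/((n-1)τ+n)`, `Ω̃(σ) ⊆ Ω^n(τ)`. -/
theorem stmt4 {n : ℕ} (hn : 1 ≤ n) (τ : ℝ) (hτ : 0 ≤ τ) (ω : Fin n → ℝ)
    (hirr : ¬ IsRationalVec ω) (hres : ¬ Resonant ω) (C : ℝ) (hC : 0 < C)
    (hper : ∀ i : ℕ, (periods ω (i + 1) : ℝ) ≤
      C * (periods ω i : ℝ) ^ (1 + τ / (((n : ℝ) - 1) * τ + (n : ℝ)))) :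
    ∃ D > (0 : ℝ), ∀ k : Fin n → ℤ, k ≠ 0 →
      distZ1 (∑ i, (k i : ℝ) * ω i) ≥
        D * (supNorm fun i => (k i : ℝ)) ^ (-(1 + τ) * (n : ℝ)) := by
  classical
  have hn0 : 0 < n := hn
  haveI : Nonempty (Fin n) := ⟨⟨0, hn0⟩⟩
  have hN1 : (1:ℝ) ≤ (n:ℝ) := by exact_mod_cast hn
  have hN0 : (0:ℝ) < (n:ℝ) := by linarith
  set s : ℝ := τ / (((n : ℝ) - 1) * τ + (n : ℝ)) with hs
  have hDn : (0:ℝ) < ((n:ℝ) - 1) * τ + (n:ℝ) := by nlinarith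
  have hs0 : 0 ≤ s := div_nonneg hτ hDn.le
  have h1s : (0:ℝ) < 1 + s := by linarith
  have hτ1 : (0:ℝ) < 1 + τ := by linarith
  have h1s_eq : 1 + s = (n:ℝ) * (1 + τ) / (((n:ℝ) - 1) * τ + (n:ℝ)) := by
    rw [hs]
    rw [eq_div_iff hDn.ne', add_mul, div_mul_cancel₀ _ hDn.ne']
    ring
  set e : ℝ := 1/(n:ℝ) + 1/(1+s) - 1 with he_def
  have he : e = ((n:ℝ) * (1 + τ))⁻¹ := by
    rw [he_def, h1s_eq, one_div_div]
    field_simp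
    ring
  have he0 : 0 < e := by rw [he]; positivity
  set C₀ : ℝ := max C 1 with hC₀def
  have hC₀1 : 1 ≤ C₀ := le_max_right _ _
  have hC₀C : C ≤ C₀ := le_max_left _ _
  refine ⟨(1/2) * (4*(n:ℝ)*C₀) ^ (-((n:ℝ)*(1+τ))), by positivity, ?_⟩
  intro k hk
  set K := supNorm (fun i => (k i : ℝ)) with hKdef
  obtain ⟨j₀, hj₀⟩ : ∃ j, k j ≠ 0 := by
    by_contra h
    push_neg at h
    exact hk (funext h)
  have hK1 : (1:ℝ) ≤ K := by
    refine le_trans ?_ (le_supNorm (fun i => (k i : ℝ)) j₀)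
    have h1 : (1:ℤ) ≤ |k j₀| := Int.one_le_abs hj₀
    calc (1:ℝ) = ((1:ℤ):ℝ) := by norm_num
      _ ≤ ((|k j₀| : ℤ) : ℝ) := by exact_mod_cast h1
      _ = |(k j₀ : ℝ)| := by push_cast [Int.cast_abs]; ring
  have hK0 : (0:ℝ) < K := by linarith
  have hkK : ∀ j, |(k j : ℝ)| ≤ K := fun j => le_supNorm (fun i => (k i : ℝ)) j
  set S := ∑ i, (k i : ℝ) * ω i with hSdef
  set m : ℤ := round S with hmdef
  set θ : ℝ := S - m with hθdef
  set ε : ℝ := |θ| with hεdef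
  have hdS : distZ1 S = ε := distZ1_eq S
  have hε0 : 0 < ε := by
    rcases (abs_nonneg θ).lt_or_eq with h | h
    · exact h
    · exfalso
      apply hres
      refine ⟨k, hk, m, ?_⟩
      have h2 : θ = 0 := abs_eq_zero.1 h.symm
      rw [hθdef] at h2
      have h3 := sub_eq_zero.1 h2
      rw [hSdef] at h3
      exact h3
  set P : ℕ → ℕ := periods ω with hPdef
  set δ : ℕ → ℝ := fun i => ddist ω (P i) with hδdef
  have hP1 : ∀ i, 1 ≤ P i := fun i => (periods_core ω hres i).1
  have hPr : ∀ i, (1:ℝ) ≤ (P i : ℝ) := fun i => by exact_mod_cast hP1 i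
  have hδpos : ∀ i, 0 < δ i := fun i => ddist_pos ω hres (hP1 i)
  have hpack : ∀ i, (P (i+1) : ℝ) ≤ (2 / δ i)^n := fun i => periods_pack ω hres i
  set A : ℕ → ℤ := fun i =>
    (∑ j, k j * round ((P i : ℝ) * ω j)) - (P i : ℤ) * m with hAdef
  have hkey : ∀ i, |(P i : ℝ) * θ - (A i : ℝ)| ≤ (n:ℝ) * K * δ i := by
    intro i
    have hcoord : ∀ j, |(P i : ℝ) * ω j - ((round ((P i:ℝ) * ω j) : ℤ) : ℝ)| ≤ δ i := by
      intro j
      show _ ≤ ddist ω (P i)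
      rw [ddist, distZ_eq]
      exact le_supNorm (fun j => (P i : ℝ) * ω j - round ((P i : ℝ) * ω j)) j
    have e1 : ∑ j, (k j : ℝ) * ((P i:ℝ)*ω j - ((round ((P i:ℝ)*ω j) : ℤ) : ℝ))
        = (P i : ℝ) * ∑ j, (k j:ℝ) * ω j
          - ∑ j, (k j:ℝ) * ((round ((P i:ℝ)*ω j) : ℤ) : ℝ) := by
      rw [Finset.mul_sum, ← Finset.sum_sub_distrib]
      apply Finset.sum_congr rfl
      intro j _
      ring
    have heq : (P i : ℝ) * θ - (A i : ℝ)
        = ∑ j, (k j : ℝ) * ((P i:ℝ)*ω j - ((round ((P i:ℝ)*ω j) : ℤ) : ℝ)) := by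
      rw [e1]
      simp only [hAdef, hθdef, hSdef]
      push_cast
      ring
    rw [heq]
    calc |∑ j, (k j : ℝ) * ((P i:ℝ)*ω j - ((round ((P i:ℝ)*ω j) : ℤ) : ℝ))|
        ≤ ∑ j, |(k j : ℝ) * ((P i:ℝ)*ω j - ((round ((P i:ℝ)*ω j) : ℤ) : ℝ))| :=
          Finset.abs_sum_le_sum_abs _ _
      _ ≤ ∑ _j : Fin n, K * δ i := by
          apply Finset.sum_le_sum
          intro j _
          rw [abs_mul]
          exact mul_le_mul (hkK j) (hcoord j) (abs_nonneg _) hK0.le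
      _ = (n:ℝ) * K * δ i := by
          rw [Finset.sum_const, Finset.card_univ, Fintype.card_fin, nsmul_eq_mul]
          ring
  have hAzero : ∀ i, A i = 0 → (P i : ℝ) * ε ≤ (n:ℝ) * K * δ i := by
    intro i h
    have h1 := hkey i
    rw [h] at h1
    simp only [Int.cast_zero, sub_zero, abs_mul, Nat.abs_cast] at h1
    rwa [hεdef]
  have hAne : ∀ i, A i ≠ 0 → 1 - (n:ℝ) * K * δ i ≤ (P i:ℝ) * ε := by
    intro i h
    have h1 : (1:ℝ) ≤ |(A i : ℝ)| := by
      have h0 := Int.one_le_abs h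
      calc (1:ℝ) = ((1:ℤ):ℝ) := by norm_num
        _ ≤ ((|A i| : ℤ) : ℝ) := by exact_mod_cast h0
        _ = |(A i : ℝ)| := by push_cast [Int.cast_abs]; ring
    have h2 := hkey i
    have h3 : |(A i:ℝ)| ≤ |(A i : ℝ) - (P i : ℝ) * θ| + |(P i : ℝ) * θ| := by
      calc |(A i:ℝ)| = |((A i : ℝ) - (P i : ℝ) * θ) + (P i : ℝ) * θ| := by ring_nf
        _ ≤ _ := abs_add_le _ _
    have h4 : |(A i : ℝ) - (P i : ℝ) * θ| = |(P i : ℝ) * θ - (A i : ℝ)| := abs_sub_comm _ _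
    have h5 : |(P i : ℝ) * θ| = (P i : ℝ) * ε := by
      rw [abs_mul, Nat.abs_cast, hεdef]
    linarith
  have hQex : ∃ i, A i ≠ 0 ∧ (n:ℝ) * K * δ i ≤ 1/2 := by
    have hcpos : (0:ℝ) < min ε (1/2) / ((n:ℝ) * K) := by positivity
    obtain ⟨i, hi⟩ := ddist_small ω hres hcpos
    have hi' : δ i < min ε (1/2) / ((n:ℝ) * K) := hi
    have hlt : (n:ℝ) * K * δ i < min ε (1/2) := by
      have h2 : (n:ℝ) * K * δ i < (n:ℝ) * K * (min ε (1/2) / ((n:ℝ) * K)) :=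
        mul_lt_mul_of_pos_left hi' (by positivity)
      rwa [mul_div_cancel₀ _ (by positivity : ((n:ℝ) * K) ≠ 0)] at h2
    refine ⟨i, ?_, le_trans hlt.le (min_le_right _ _)⟩
    intro hA0
    have h1 := hAzero i hA0
    have h2 : ε ≤ (P i : ℝ) * ε := le_mul_of_one_le_left hε0.le (hPr i)
    have h3 : (n:ℝ) * K * δ i < ε := lt_of_lt_of_le hlt (min_le_left _ _)
    linarith
  set i₁ := Nat.find hQex with hi₁def
  obtain ⟨hA1, hhalf1⟩ : A i₁ ≠ 0 ∧ (n:ℝ) * K * δ i₁ ≤ 1/2 := Nat.find_spec hQex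
  set t : ℝ := (P i₁ : ℝ) with htdef
  have ht1 : (1:ℝ) ≤ t := hPr i₁
  have ht0 : (0:ℝ) < t := by linarith
  have h12 : 1/2 ≤ t * ε := by
    have := hAne i₁ hA1
    linarith
  have hεt : 1/(2*t) ≤ ε := by
    rw [div_le_iff₀ (by positivity)]
    nlinarith
  set B : ℝ := (4*(n:ℝ)*C₀*K) ^ ((n:ℝ)*(1+τ)) with hBdef
  have hC₀0 : (0:ℝ) < C₀ := lt_of_lt_of_le one_pos hC₀1
  have hbase1 : (1:ℝ) ≤ 4*(n:ℝ)*C₀*K := by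
    calc (1:ℝ) ≤ 4*(n:ℝ) := by linarith
      _ ≤ 4*(n:ℝ)*C₀ := le_mul_of_one_le_right (by linarith) hC₀1
      _ ≤ 4*(n:ℝ)*C₀*K := le_mul_of_one_le_right (by positivity) hK1
  have hboe : (0:ℝ) ≤ (n:ℝ)*(1+τ) := by positivity
  have hB1 : (1:ℝ) ≤ B := by
    rw [hBdef]
    calc (1:ℝ) = (4*(n:ℝ)*C₀*K) ^ (0:ℝ) := (Real.rpow_zero _).symm
      _ ≤ _ := Real.rpow_le_rpow_of_exponent_le hbase1 hboe
  have hB0 : (0:ℝ) < B := by linarith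
  have htB : t ≤ B := by
    obtain h0 | ⟨j, hj⟩ : i₁ = 0 ∨ ∃ j, i₁ = j + 1 := by
      rcases Nat.eq_zero_or_pos i₁ with h0 | hpos
      · exact Or.inl h0
      · exact Or.inr ⟨i₁ - 1, by omega⟩
    · have ht1' : t = 1 := by rw [htdef, h0, hPdef, periods_zero]; norm_num
      rw [ht1']
      exact hB1
    · have hQj : ¬ (A j ≠ 0 ∧ (n:ℝ) * K * δ j ≤ 1/2) :=
        Nat.find_min hQex (by omega : j < i₁)
      have hδj0 : 0 < δ j := hδpos j
      have hpackj : t ≤ (2 / δ j)^n := by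
        rw [htdef, hj]
        exact hpack j
      by_cases hAj : (n:ℝ) * K * δ j ≤ 1/2
      · -- main case: A j = 0
        have hAj0 : A j = 0 := by
          by_contra h
          exact hQj ⟨h, hAj⟩
        set w : ℝ := (P j : ℝ) with hwdef
        have hw1 : (1:ℝ) ≤ w := hPr j
        have hw0 : (0:ℝ) < w := by linarith
        have h2 : w * ε ≤ (n:ℝ) * K * δ j := hAzero j hAj0
        have h4 : t ≤ C * w ^ (1 + s) := by
          have hh := hper j
          rw [htdef, hj]
          exact hh
        have hδt : δ j ≤ 2 * t ^ (-(1/(n:ℝ))) := by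
          have hb0 : (0:ℝ) ≤ 2 / δ j := by positivity
          have hr1 : t ^ (1/(n:ℝ)) ≤ 2 / δ j := by
            have h5 := Real.rpow_le_rpow ht0.le hpackj
              (show (0:ℝ) ≤ 1/(n:ℝ) by positivity)
            rwa [← Real.rpow_natCast (2 / δ j) n, ← Real.rpow_mul hb0,
              mul_one_div, div_self hN0.ne', Real.rpow_one] at h5
          have hr0 : (0:ℝ) < t ^ (1/(n:ℝ)) := Real.rpow_pos_of_pos ht0 _
          rw [le_div_iff₀ hδj0] at hr1
          have h7 : δ j ≤ 2 / t ^ (1/(n:ℝ)) := by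
            rw [le_div_iff₀ hr0]
            nlinarith
          rwa [div_eq_mul_inv, ← Real.rpow_neg ht0.le] at h7
        have hw_lb : (t/C) ^ (1/(1+s)) ≤ w := by
          have htC0 : (0:ℝ) < t / C := by positivity
          have h8 : t / C ≤ w ^ (1+s) := by
            rw [div_le_iff₀ hC]
            nlinarith
          have h9 := Real.rpow_le_rpow htC0.le h8
            (show (0:ℝ) ≤ 1/(1+s) by positivity)
          rwa [← Real.rpow_mul hw0.le, mul_one_div, div_self h1s.ne',
            Real.rpow_one] at h9
        have h11' : w ≤ (n:ℝ)*K*δ j * (2*t) := by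
          have h10 : w * (1/(2*t)) ≤ w * ε := mul_le_mul_of_nonneg_left hεt hw0.le
          have h11 : w / (2*t) ≤ (n:ℝ)*K*δ j := by
            rw [div_eq_mul_one_div]
            exact le_trans h10 h2
          rw [div_le_iff₀ (by positivity)] at h11
          exact h11
        have ht_split : t * t ^ (-(1/(n:ℝ))) = t ^ (1 - 1/(n:ℝ)) := by
          nth_rewrite 1 [← Real.rpow_one t]
          rw [← Real.rpow_add ht0]
          ring_nf
        have h13 : w ≤ 4*(n:ℝ)*K*(t ^ (1 - 1/(n:ℝ))) := by
          calc w ≤ (n:ℝ)*K*δ j * (2*t) := h11'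
            _ ≤ (n:ℝ)*K*(2 * t ^ (-(1/(n:ℝ)))) * (2*t) := by
                apply mul_le_mul_of_nonneg_right ?_ (by positivity)
                exact mul_le_mul_of_nonneg_left hδt (by positivity)
            _ = 4*(n:ℝ)*K*(t * t ^ (-(1/(n:ℝ)))) := by ring
            _ = 4*(n:ℝ)*K*(t ^ (1 - 1/(n:ℝ))) := by rw [ht_split]
        have h14 : (t/C) ^ (1/(1+s)) ≤ 4*(n:ℝ)*K*(t ^ (1 - 1/(n:ℝ))) :=
          le_trans hw_lb h13
        have h15 : t ^ (1/(1+s)) ≤ 4*(n:ℝ)*K*(t ^ (1 - 1/(n:ℝ))) * C ^ (1/(1+s)) := by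
          rw [Real.div_rpow ht0.le hC.le] at h14
          have hC0' : (0:ℝ) < C ^ (1/(1+s)) := Real.rpow_pos_of_pos hC _
          rw [div_le_iff₀ hC0'] at h14
          exact h14
        have h16 : t ^ e ≤ 4*(n:ℝ)*K * C ^ (1/(1+s)) := by
          have hsplit : t ^ e = t ^ (1/(1+s)) * t ^ (1/(n:ℝ) - 1) := by
            rw [← Real.rpow_add ht0]
            congr 1
            rw [he_def]
            ring
          have hmul := mul_le_mul_of_nonneg_right h15
            (le_of_lt (Real.rpow_pos_of_pos ht0 (1/(n:ℝ) - 1)))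
          rw [hsplit]
          refine le_trans hmul (le_of_eq ?_)
          have hcollapse : t ^ (1 - 1/(n:ℝ)) * t ^ (1/(n:ℝ) - 1) = 1 := by
            rw [← Real.rpow_add ht0]
            have hz : (1 - 1/(n:ℝ)) + (1/(n:ℝ) - 1) = 0 := by ring
            rw [hz, Real.rpow_zero]
          calc 4*(n:ℝ)*K*(t ^ (1 - 1/(n:ℝ))) * C ^ (1/(1+s)) * t ^ (1/(n:ℝ) - 1)
              = 4*(n:ℝ)*K * C ^ (1/(1+s)) * (t ^ (1 - 1/(n:ℝ)) * t ^ (1/(n:ℝ) - 1)) := by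
                ring
            _ = 4*(n:ℝ)*K * C ^ (1/(1+s)) := by rw [hcollapse, mul_one]
        have hCu : C ^ (1/(1+s)) ≤ C₀ := by
          rcases le_total C 1 with h | h
          · exact le_trans (Real.rpow_le_one hC.le h (by positivity)) hC₀1
          · have hle : C ^ (1/(1+s)) ≤ C ^ (1:ℝ) := by
              apply Real.rpow_le_rpow_of_exponent_le h
              rw [div_le_one h1s]
              linarith
            rw [Real.rpow_one] at hle
            exact le_trans hle hC₀C
        have h17 : t ^ e ≤ 4*(n:ℝ)*C₀*K := by
          calc t ^ e ≤ 4*(n:ℝ)*K * C ^ (1/(1+s)) := h16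
            _ ≤ 4*(n:ℝ)*K * C₀ := mul_le_mul_of_nonneg_left hCu (by positivity)
            _ = 4*(n:ℝ)*C₀*K := by ring
        have h18 : t = (t ^ e) ^ e⁻¹ := by
          rw [← Real.rpow_mul ht0.le, mul_inv_cancel₀ he0.ne', Real.rpow_one]
        have hei : e⁻¹ = (n:ℝ)*(1+τ) := by rw [he, inv_inv]
        rw [h18, hBdef, ← hei]
        exact Real.rpow_le_rpow (by positivity) h17 (inv_nonneg.2 he0.le)
      · push_neg at hAj
        have h2d : 2 / δ j < 4*(n:ℝ)*K := by
          rw [div_lt_iff₀ hδj0]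
          nlinarith
        have ht4 : t ≤ (4*(n:ℝ)*K)^n :=
          le_trans hpackj (pow_le_pow_left₀ (by positivity) h2d.le n)
        calc t ≤ (4*(n:ℝ)*K)^n := ht4
          _ = (4*(n:ℝ)*K) ^ ((n:ℕ):ℝ) := (Real.rpow_natCast _ n).symm
          _ ≤ (4*(n:ℝ)*C₀*K) ^ ((n:ℝ)) := by
              apply Real.rpow_le_rpow (by positivity) ?_ hN0.le
              nlinarith [mul_nonneg (sub_nonneg.2 hC₀1) hK0.le, hN0]
          _ ≤ B := by
              rw [hBdef]
              exact Real.rpow_le_rpow_of_exponent_le hbase1 (by nlinarith)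
  rw [ge_iff_le, hdS]
  have hεB : 1/(2*B) ≤ ε := by
    refine le_trans ?_ hεt
    apply one_div_le_one_div_of_le (by positivity)
    linarith
  have hexp : (-(1+τ) * (n:ℝ)) = -((n:ℝ)*(1+τ)) := by ring
  calc (1/2) * (4*(n:ℝ)*C₀) ^ (-((n:ℝ)*(1+τ))) * K ^ (-(1+τ)*(n:ℝ))
      = 1/(2*B) := by
        rw [hexp, Real.rpow_neg (by positivity : (0:ℝ) ≤ 4*(n:ℝ)*C₀),
          Real.rpow_neg hK0.le, hBdef,
          Real.mul_rpow (by positivity : (0:ℝ) ≤ 4*(n:ℝ)*C₀) hK0.le]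
        field_simp
    _ ≤ ε := hεB
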